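/- Let $\mathbb{F}_q$ be a finite field with $q$ elements, $\varepsilon, \omega, \chi$ multiplicative characters of $\mathbb{F}_q^\times$ (extended by $0$ at $0$), and $z \in \mathbb{F}_q$. Define $H(\varepsilon,\omega,\chi; z) = \sum_{x \in \mathbb{F}_q} \varepsilon(x)\omega(1-x)\chi^{-1}(1-zx)$. Then the change of variables $x = (1-y)/(1-zy)$ yields the identity $H(\varepsilon,\omega,\chi; z) = \omega\chi^{-1}(1-z)\, H(\omega, \varepsilon, \varepsilon\omega\chi^{-1}; z)$ for all $z \neq 1$. -/

import Mathlib

open Finset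

/-- The finite hypergeometric sum `H(ε,ω,χ;z) = ∑_{x ∈ 𝔽_q} ε(x) ω(1-x) χ⁻¹(1-zx)`,
where multiplicative characters are extended by `0` at `0`. -/
noncomputable def hypSum {F : Type*} [Field F] [Fintype F]
    (ε ω χ : MulChar F ℂ) (z : F) : ℂ :=
  ∑ x : F, ε x * ω (1 - x) * χ⁻¹ (1 - z * x)

private lemma mulChar_inv_val {F : Type*} [Field F] (ψ : MulChar F ℂ) (a : F) :
    ψ a⁻¹ = (ψ a)⁻¹ :=
  (MulChar.inv_apply' ψ a).symm.trans (MulChar.inv_apply_eq_inv' ψ a)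

private lemma mulChar_ne_zero {F : Type*} [Field F] (ψ : MulChar F ℂ) {a : F} (ha : a ≠ 0) :
    ψ a ≠ 0 := by
  intro h
  have h1 : ψ a * ψ a⁻¹ = 1 := by
    rw [← map_mul, mul_inv_cancel₀ ha, map_one]
  rw [h, zero_mul] at h1
  exact zero_ne_one h1

/-- The change of variables `x = (1-y)/(1-zy)` yields
`H(ε,ω,χ;z) = (ωχ⁻¹)(1-z) ⬝ H(ω,ε,εωχ⁻¹;z)` for `z ≠ 1`. -/
theorem hypSum_transformation {F : Type*} [Field F] [Fintype F]
    (ε ω χ : MulChar F ℂ) (z : F) (hz : z ≠ 1) :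
    hypSum ε ω χ z = ω (1 - z) * χ⁻¹ (1 - z) * hypSum ω ε (ε * ω * χ⁻¹) z := by
  classical
  have hz1 : (1 : F) - z ≠ 0 := sub_ne_zero.mpr fun h => hz h.symm
  rw [hypSum, hypSum, Finset.mul_sum]
  have hL : (∑ x : F, ε x * ω (1 - x) * χ⁻¹ (1 - z * x)) =
      ∑ x ∈ Finset.univ.filter (fun x : F => x ≠ 0 ∧ 1 - x ≠ 0 ∧ 1 - z * x ≠ 0),
        ε x * ω (1 - x) * χ⁻¹ (1 - z * x) := by
    refine (Finset.sum_filter_of_ne fun x _ hx => ?_).symm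
    refine ⟨fun h => hx ?_, fun h => hx ?_, fun h => hx ?_⟩
    · rw [h, MulChar.map_zero, zero_mul, zero_mul]
    · rw [h, MulChar.map_zero, mul_zero, zero_mul]
    · rw [h, MulChar.map_zero, mul_zero]
  have hR : (∑ y : F, ω (1 - z) * χ⁻¹ (1 - z) *
        (ω y * ε (1 - y) * (ε * ω * χ⁻¹)⁻¹ (1 - z * y))) =
      ∑ y ∈ Finset.univ.filter (fun y : F => y ≠ 0 ∧ 1 - y ≠ 0 ∧ 1 - z * y ≠ 0),
        ω (1 - z) * χ⁻¹ (1 - z) * (ω y * ε (1 - y) * (ε * ω * χ⁻¹)⁻¹ (1 - z * y)) := by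
    refine (Finset.sum_filter_of_ne fun y _ hy => ?_).symm
    refine ⟨fun h => hy ?_, fun h => hy ?_, fun h => hy ?_⟩
    · rw [h, MulChar.map_zero, zero_mul, zero_mul, mul_zero]
    · rw [h, MulChar.map_zero, mul_zero, zero_mul, mul_zero]
    · rw [h, MulChar.map_zero, mul_zero, mul_zero]
  rw [hL, hR]
  refine Finset.sum_nbij' (fun x => (1 - x) / (1 - z * x)) (fun y => (1 - y) / (1 - z * y))
    ?_ ?_ ?_ ?_ ?_
  · rintro x hx
    rw [Finset.mem_filter] at hx ⊢
    obtain ⟨-, hx0, hx1, hxz⟩ := hx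
    refine ⟨Finset.mem_univ _, div_ne_zero hx1 hxz, ?_, ?_⟩
    · have : 1 - (1 - x) / (1 - z * x) = x * (1 - z) / (1 - z * x) := by
        rw [eq_div_iff hxz, sub_mul, div_mul_cancel₀ _ hxz]; ring
      rw [this]
      exact div_ne_zero (mul_ne_zero hx0 hz1) hxz
    · have : 1 - z * ((1 - x) / (1 - z * x)) = (1 - z) / (1 - z * x) := by
        field_simp; ring
      rw [this]
      exact div_ne_zero hz1 hxz
  · rintro y hy
    rw [Finset.mem_filter] at hy ⊢
    obtain ⟨-, hy0, hy1, hyz⟩ := hy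
    refine ⟨Finset.mem_univ _, div_ne_zero hy1 hyz, ?_, ?_⟩
    · have : 1 - (1 - y) / (1 - z * y) = y * (1 - z) / (1 - z * y) := by
        rw [eq_div_iff hyz, sub_mul, div_mul_cancel₀ _ hyz]; ring
      rw [this]
      exact div_ne_zero (mul_ne_zero hy0 hz1) hyz
    · have : 1 - z * ((1 - y) / (1 - z * y)) = (1 - z) / (1 - z * y) := by
        field_simp; ring
      rw [this]
      exact div_ne_zero hz1 hyz
  · rintro x hx
    rw [Finset.mem_filter] at hx
    obtain ⟨-, hx0, hx1, hxz⟩ := hx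
    have e1 : (1 : F) - (1 - x) / (1 - z * x) = x * (1 - z) / (1 - z * x) := by
      rw [eq_div_iff hxz, sub_mul, div_mul_cancel₀ _ hxz]; ring
    have e2 : (1 : F) - z * ((1 - x) / (1 - z * x)) = (1 - z) / (1 - z * x) := by
      field_simp; ring
    rw [e1, e2, div_div_div_cancel_right₀, mul_div_assoc, div_self hz1, mul_one]
    exact hxz
  · rintro y hy
    rw [Finset.mem_filter] at hy
    obtain ⟨-, hy0, hy1, hyz⟩ := hy
    have e1 : (1 : F) - (1 - y) / (1 - z * y) = y * (1 - z) / (1 - z * y) := by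
      rw [eq_div_iff hyz, sub_mul, div_mul_cancel₀ _ hyz]; ring
    have e2 : (1 : F) - z * ((1 - y) / (1 - z * y)) = (1 - z) / (1 - z * y) := by
      field_simp; ring
    rw [e1, e2, div_div_div_cancel_right₀, mul_div_assoc, div_self hz1, mul_one]
    exact hyz
  · rintro x hx
    rw [Finset.mem_filter] at hx
    obtain ⟨-, hx0, hx1, hxz⟩ := hx
    have e1 : (1 : F) - (1 - x) / (1 - z * x) = x * (1 - z) / (1 - z * x) := by
      rw [eq_div_iff hxz, sub_mul, div_mul_cancel₀ _ hxz]; ring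
    have e2 : (1 : F) - z * ((1 - x) / (1 - z * x)) = (1 - z) / (1 - z * x) := by
      field_simp; ring
    rw [e1, e2]
    simp only [div_eq_mul_inv, map_mul, mulChar_inv_val, MulChar.inv_apply_eq_inv',
      MulChar.mul_apply]
    have h1 := mulChar_ne_zero ε hxz
    have h2 := mulChar_ne_zero ω hxz
    have h3 := mulChar_ne_zero χ hxz
    have h4 := mulChar_ne_zero χ hz1
    have h5 := mulChar_ne_zero ε hx1
    have h6 := mulChar_ne_zero ω hx0
    have h7 := mulChar_ne_zero ω hz1
    have h8 := mulChar_ne_zero ε hz1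
    have hxz' : (1 : F) - x * z ≠ 0 := by rwa [mul_comm]
    have h1' := mulChar_ne_zero ε hxz'
    have h2' := mulChar_ne_zero ω hxz'
    have h3' := mulChar_ne_zero χ hxz'
    field_simp
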